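/- If T is a finite tree that is not a path, then dim(T) = σ(T) − ex(T), where σ(T) is the number of leaves of T and ex(T) is the number of exterior major vertices of T. -/

import Mathlib

open SimpleGraph

/-- `W` is a resolving set of `G`: every pair of distinct vertices is
distinguished by its distance to some vertex of `W`. -/
def IsResolving {V : Type*} (G : SimpleGraph V) (W : Set V) : Prop :=
  ∀ x y : V, x ≠ y → ∃ z ∈ W, G.dist x z ≠ G.dist y z

/-- The metric dimension of `G`: the minimum cardinality of a resolving set. -/
noncomputable def metricDim {V : Type*} (G : SimpleGraph V) : ℕ :=
  sInf {n | ∃ W : Set V, W.ncard = n ∧ IsResolving G W}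

/-- A leaf of `T`: a vertex of degree 1. -/
def IsLeaf {V : Type*} (T : SimpleGraph V) (v : V) : Prop :=
  (T.neighborSet v).ncard = 1

/-- A major vertex of `T`: a vertex of degree at least 3. -/
def IsMajor {V : Type*} (T : SimpleGraph V) (v : V) : Prop :=
  3 ≤ (T.neighborSet v).ncard

/-- A leaf `ℓ` is a terminal vertex of a major vertex `v` if `ℓ` is strictly closer
to `v` than to any other major vertex. -/
def IsTerminalOf {V : Type*} (T : SimpleGraph V) (ℓ v : V) : Prop :=
  IsLeaf T ℓ ∧ IsMajor T v ∧ ∀ w, IsMajor T w → w ≠ v → T.dist ℓ v < T.dist ℓ w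

/-- An exterior major vertex of `T`: a major vertex having at least one terminal
vertex. -/
def IsExteriorMajor {V : Type*} (T : SimpleGraph V) (v : V) : Prop :=
  ∃ ℓ, IsTerminalOf T ℓ v

set_option linter.unusedSectionVars false
set_option linter.unusedVariables false
namespace MetricDimTree

variable {V : Type*} [Fintype V] {T : SimpleGraph V}

theorem path_len (hT : T.IsTree) {u v : V} (p : T.Walk u v) (hp : p.IsPath) :
    p.length = T.dist u v := by
  obtain ⟨q, hq, hlen⟩ := hT.isConnected.exists_path_of_dist u v
  rwa [(hT.existsUnique_path u v).unique hp hq]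

def Btw (T : SimpleGraph V) (x z y : V) : Prop := T.dist x z + T.dist z y = T.dist x y

theorem adj_dist {u a : V} (h : T.Adj u a) : T.dist u a = 1 := dist_eq_one_iff_adj.mpr h

theorem btw_comm {x z y : V} : Btw T x z y ↔ Btw T y z x := by
  unfold Btw
  have h1 : T.dist x z = T.dist z x := dist_comm
  have h2 : T.dist z y = T.dist y z := dist_comm
  have h3 : T.dist x y = T.dist y x := dist_comm
  omega

theorem btw_left (x y : V) : Btw T x x y := by simp [Btw]

theorem btw_right (x y : V) : Btw T x y y := by simp [Btw]

theorem dist_tri (hc : T.Connected) (x z y : V) : T.dist x y ≤ T.dist x z + T.dist z y :=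
  hc.dist_triangle

theorem btw_trans (hc : T.Connected) {x z y w : V} (h1 : Btw T x z y) (h2 : Btw T x w z) :
    Btw T x w y ∧ Btw T w z y := by
  unfold Btw at *
  have t1 := dist_tri hc x w y
  have t2 := dist_tri hc w z y
  constructor <;> omega

theorem btw_trans' (hc : T.Connected) {x z y w : V} (h1 : Btw T x z y) (h2 : Btw T z w y) :
    Btw T x w y ∧ Btw T x z w := by
  rw [btw_comm] at h1 h2 ⊢
  have := btw_trans hc h1 h2
  exact ⟨this.1, btw_comm.mp this.2⟩

theorem btw_of_mem_support (hT : T.IsTree) {x y z : V} (p : T.Walk x y) (hp : p.IsPath)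
    (hz : z ∈ p.support) : Btw T x z y := by
  classical
  have h1 : (p.takeUntil z hz).length = T.dist x z := path_len hT _ (hp.takeUntil hz)
  have h2 : (p.dropUntil z hz).length = T.dist z y := path_len hT _ (hp.dropUntil hz)
  have h3 : p.length = T.dist x y := path_len hT p hp
  have h4 := congrArg Walk.length (p.take_spec hz)
  rw [Walk.length_append] at h4
  unfold Btw; omega

theorem mem_support_of_btw (hT : T.IsTree) {x y z : V} (h : Btw T x z y)
    (p : T.Walk x y) (hp : p.IsPath) : z ∈ p.support := by
  obtain ⟨q1, hq1, l1⟩ := hT.isConnected.exists_path_of_dist x z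
  obtain ⟨q2, hq2, l2⟩ := hT.isConnected.exists_path_of_dist z y
  have hw : (q1.append q2).length = T.dist x y := by
    rw [Walk.length_append]; unfold Btw at h; omega
  have hwp := (q1.append q2).isPath_of_length_eq_dist hw
  rw [(hT.existsUnique_path x y).unique hp hwp, Walk.mem_support_append_iff]
  exact Or.inl q1.end_mem_support

/-- Two vertices on a common geodesic are comparable. -/
theorem btw_comp (hT : T.IsTree) {x y u w : V} (h1 : Btw T x u y) (h2 : Btw T x w y) :
    Btw T x w u ∨ Btw T x u w := by
  classical
  obtain ⟨p, hp, _⟩ := hT.isConnected.exists_path_of_dist x y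
  have hu : u ∈ p.support := mem_support_of_btw hT h1 p hp
  have hw : w ∈ p.support := mem_support_of_btw hT h2 p hp
  have hw' : w ∈ (p.takeUntil u hu).support ∨ w ∈ (p.dropUntil u hu).support := by
    rw [← Walk.mem_support_append_iff, p.take_spec hu]; exact hw
  rcases hw' with h | h
  · exact Or.inl (btw_of_mem_support hT _ (hp.takeUntil hu) h)
  · have := btw_of_mem_support hT _ (hp.dropUntil hu) h
    exact Or.inr (btw_trans' hT.isConnected h1 this).2

theorem dist_zero (hc : T.Connected) {x y : V} (h : T.dist x y = 0) : x = y :=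
  (hc.dist_eq_zero_iff).mp h

/-- Existence of medians (meets) in a tree. -/
theorem meet (hT : T.IsTree) (x y z : V) :
    ∃ t, Btw T x t y ∧ Btw T z t x ∧ Btw T z t y := by
  have hc := hT.isConnected
  have hne : ({u | Btw T x u y ∧ Btw T z u x} : Set V).Nonempty :=
    ⟨x, btw_left x y, btw_right z x⟩
  obtain ⟨t, ⟨hty, htx⟩, hmin⟩ :=
    Set.exists_min_image _ (fun u => T.dist z u) (Set.toFinite _) hne
  refine ⟨t, hty, htx, ?_⟩
  obtain ⟨q1, hq1, l1⟩ := hc.exists_path_of_dist z t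
  obtain ⟨q2, hq2, l2⟩ := hc.exists_path_of_dist t y
  have hdisj : q1.support.Disjoint q2.support.tail := by
    intro a ha1 ha2
    have ha2' : a ∈ q2.support := List.mem_of_mem_tail ha2
    have hat : a ≠ t := by
      have := hq2.support_nodup
      rw [q2.support_eq_cons, List.nodup_cons] at this
      rintro rfl; exact this.1 ha2
    have hbza : Btw T z a t := btw_of_mem_support hT q1 hq1 ha1
    have hbta : Btw T t a y := btw_of_mem_support hT q2 hq2 ha2'
    have hxay : Btw T x a y := (btw_trans' hc hty hbta).1
    have hzax : Btw T z a x := (btw_trans hc htx hbza).1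
    have hle := hmin a ⟨hxay, hzax⟩
    have : T.dist z a + T.dist a t = T.dist z t := hbza
    have : T.dist a t = 0 := by omega
    exact hat (dist_zero hc this)
  have hpath : (q1.append q2).IsPath := by
    rw [Walk.isPath_def, Walk.support_append]
    exact List.Nodup.append hq1.support_nodup
      (hq2.support_nodup.sublist (List.tail_sublist _)) hdisj
  have := path_len hT _ hpath
  rw [Walk.length_append] at this
  unfold Btw; omega

theorem step (hT : T.IsTree) {u v : V} (h : u ≠ v) :
    ∃ a, T.Adj u a ∧ T.dist a v + 1 = T.dist u v := by
  obtain ⟨p, hp, hlen⟩ := hT.isConnected.exists_path_of_dist u v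
  cases p with
  | nil => exact absurd rfl h
  | @cons _ a _ hadj q =>
    refine ⟨a, hadj, ?_⟩
    have hq : q.length = T.dist a v := path_len hT q hp.of_cons
    rw [Walk.length_cons] at hlen; omega

theorem step_btw {u v a : V} (hc : T.Connected) (ha : T.Adj u a)
    (hd : T.dist a v + 1 = T.dist u v) : Btw T u a v := by
  unfold Btw; rw [adj_dist ha]; omega

theorem step_uniq (hT : T.IsTree) {u v a a' : V} (ha : T.Adj u a) (ha' : T.Adj u a')
    (hd : T.dist a v + 1 = T.dist u v) (hd' : T.dist a' v + 1 = T.dist u v) : a = a' := by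
  have hw1 : (Walk.cons ha (hT.isConnected.exists_path_of_dist a v).choose).IsPath := by
    apply Walk.isPath_of_length_eq_dist
    rw [Walk.length_cons, (hT.isConnected.exists_path_of_dist a v).choose_spec.2]
    omega
  have hw2 : (Walk.cons ha' (hT.isConnected.exists_path_of_dist a' v).choose).IsPath := by
    apply Walk.isPath_of_length_eq_dist
    rw [Walk.length_cons, (hT.isConnected.exists_path_of_dist a' v).choose_spec.2]
    omega
  have heq := (hT.existsUnique_path u v).unique hw1 hw2
  have := congrArg Walk.support heq
  rw [Walk.support_cons, Walk.support_cons,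
    Walk.support_eq_cons (hT.isConnected.exists_path_of_dist a v).choose,
    Walk.support_eq_cons (hT.isConnected.exists_path_of_dist a' v).choose] at this
  exact (List.cons.injEq _ _ _ _).mp ((List.cons.injEq _ _ _ _).mp this).2 |>.1

/-- The unique step from `u` toward `v`: betweenness version of uniqueness. -/
theorem step_uniq' (hT : T.IsTree) {u v a a' : V} (ha : T.Adj u a) (ha' : T.Adj u a')
    (hb : Btw T u a v) (hb' : Btw T u a' v) : a = a' := by
  apply step_uniq (v := v) hT ha ha'
  · have := adj_dist ha; unfold Btw at hb; omega
  · have := adj_dist ha'; unfold Btw at hb'; omega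


theorem major_of_three {u a b c : V} (ha : T.Adj u a) (hb : T.Adj u b) (hc : T.Adj u c)
    (hab : a ≠ b) (hac : a ≠ c) (hbc : b ≠ c) : IsMajor T u := by
  have hsub : ({a, b, c} : Set V) ⊆ T.neighborSet u := by
    intro x hx
    rcases hx with rfl | rfl | rfl <;> assumption
  have h3 : ({a, b, c} : Set V).ncard = 3 := by
    rw [Set.ncard_insert_of_notMem (by simp [hab, hac]) (Set.toFinite _),
      Set.ncard_insert_of_notMem (by simpa using hbc) (Set.toFinite _),
      Set.ncard_singleton]
  have := Set.ncard_le_ncard hsub (Set.toFinite _)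
  unfold IsMajor; omega

theorem leaf_unique_nbr {l a b : V} (hl : IsLeaf T l) (ha : T.Adj l a) (hb : T.Adj l b) :
    a = b := by
  obtain ⟨x, hx⟩ := Set.ncard_eq_one.mp hl
  have h1 : a ∈ T.neighborSet l := ha
  have h2 : b ∈ T.neighborSet l := hb
  rw [hx] at h1 h2
  rw [Set.mem_singleton_iff.mp h1, Set.mem_singleton_iff.mp h2]

theorem leaf_not_major {l : V} (hl : IsLeaf T l) (hm : IsMajor T l) : False := by
  unfold IsLeaf at hl; unfold IsMajor at hm; omega

theorem dist_pos (hc : T.Connected) {x y : V} (h : x ≠ y) : 0 < T.dist x y :=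
  hc.pos_dist_of_ne h

/-- A leaf cannot lie strictly between two vertices. -/
theorem leaf_not_btw (hT : T.IsTree) {l x y : V} (hl : IsLeaf T l) (hb : Btw T x l y)
    (hx : l ≠ x) (hy : l ≠ y) : False := by
  have hc := hT.isConnected
  obtain ⟨a, haadj, hda⟩ := step hT hx
  obtain ⟨b, hbadj, hdb⟩ := step hT hy
  have hab : a = b := leaf_unique_nbr hl haadj hbadj
  have h1 : T.dist x a = T.dist a x := dist_comm
  have h2 : T.dist x b ≤ T.dist x l + T.dist l b := dist_tri hc x l b
  have h3 : T.dist x y ≤ T.dist x b + T.dist b y := dist_tri hc x b y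
  have h4 : T.dist l b = 1 := adj_dist hbadj
  have h5 : T.dist l x = T.dist x l := dist_comm
  have hb' : T.dist x l + T.dist l y = T.dist x y := hb
  have hpos : 0 < T.dist x l := by
    have := dist_pos hc (Ne.symm hx); omega
  subst hab
  omega

theorem exists_adj (hT : T.IsTree) (hnp : ∃ w, IsMajor T w) (u : V) : ∃ a, T.Adj u a := by
  obtain ⟨w, hw⟩ := hnp
  by_cases h : u = w
  · subst h
    have : (T.neighborSet u).Nonempty := by
      apply Set.nonempty_of_ncard_ne_zero
      unfold IsMajor at hw; omega
    obtain ⟨a, ha⟩ := this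
    exact ⟨a, ha⟩
  · obtain ⟨a, ha, _⟩ := step hT h
    exact ⟨a, ha⟩

/-- From any non-leaf, one can step away from `u`; from a leaf only if at `u`. -/
theorem step_away (hT : T.IsTree) (hnp : ∃ w, IsMajor T w) {u x : V} (hx : ¬ IsLeaf T x) :
    ∃ a, T.Adj x a ∧ T.dist u a = T.dist u x + 1 := by
  have hc := hT.isConnected
  have key : ∀ a, T.Adj x a → T.dist u a ≠ T.dist u x := by
    intro a hadj heq
    obtain ⟨q, hq, hlen⟩ := hc.exists_path_of_dist u a
    have hxq : x ∉ q.support := by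
      intro hmem
      have hbtw : Btw T u x a := btw_of_mem_support hT q hq hmem
      have : T.dist u x + T.dist x a = T.dist u a := hbtw
      have : T.dist x a = 0 := by omega
      exact hadj.ne (dist_zero hc this)
    have hw : (Walk.cons hadj q.reverse).IsPath := by
      rw [Walk.cons_isPath_iff]
      refine ⟨hq.reverse, ?_⟩
      rw [Walk.support_reverse]
      simpa using hxq
    have := path_len hT _ hw
    rw [Walk.length_cons, Walk.length_reverse] at this
    have hcm : T.dist x u = T.dist u x := dist_comm
    omega
  by_cases hxu : x = u
  · subst hxu
    obtain ⟨a, ha⟩ := exists_adj hT hnp x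
    refine ⟨a, ha, ?_⟩
    rw [adj_dist ha, dist_self]
  · obtain ⟨s, hs, hds⟩ := step hT hxu
    have hds' : T.dist s u + 1 = T.dist x u := hds
    have hn1 : (T.neighborSet x).ncard ≠ 1 := hx
    have hne : (T.neighborSet x).Nonempty := ⟨s, hs⟩
    have h2 : 1 < (T.neighborSet x).ncard := by
      have := (Set.ncard_pos (Set.toFinite _)).mpr hne
      omega
    obtain ⟨a, haS, has⟩ := Set.exists_ne_of_one_lt_ncard h2 s
    have hadj : T.Adj x a := haS
    refine ⟨a, hadj, ?_⟩
    have t1 : T.dist u a ≤ T.dist u x + 1 := by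
      have := dist_tri hc u x a
      have := adj_dist hadj
      omega
    have t2 : T.dist u x ≤ T.dist u a + 1 := by
      have := dist_tri hc u a x
      have h5 : T.dist a x = T.dist x a := dist_comm
      have := adj_dist hadj
      omega
    have t3 := key a hadj
    rcases Nat.lt_trichotomy (T.dist u a) (T.dist u x) with hlt | heq | hgt
    · exfalso
      have hstep : T.dist a u + 1 = T.dist x u := by
        have c1 : T.dist a u = T.dist u a := dist_comm
        have c2 : T.dist x u = T.dist u x := dist_comm
        omega
      exact has (step_uniq hT hadj hs hstep hds)
    · exact absurd heq t3
    · omega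

theorem dist_lt_card (hT : T.IsTree) (u x : V) : T.dist u x < Fintype.card V := by
  obtain ⟨p, hp, hlen⟩ := hT.isConnected.exists_path_of_dist u x
  have h1 : p.support.length = p.length + 1 := Walk.length_support p
  have h2 := hp.support_nodup.length_le_card
  omega

/-- Extension lemma: beyond every vertex there is a leaf. -/
theorem ext_leaf (hT : T.IsTree) (hnp : ∃ w, IsMajor T w) (u x : V) :
    ∃ l, IsLeaf T l ∧ Btw T u x l := by
  have hc := hT.isConnected
  suffices h : ∀ n x, Fintype.card V - T.dist u x ≤ n → ∃ l, IsLeaf T l ∧ Btw T u x l by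
    exact h (Fintype.card V) x (by omega)
  intro n
  induction n with
  | zero => intro x hx; exact absurd hx (by have := dist_lt_card hT u x; omega)
  | succ n ih =>
    intro x hx
    by_cases hleaf : IsLeaf T x
    · exact ⟨x, hleaf, btw_right u x⟩
    · obtain ⟨a, hadj, hda⟩ := step_away (u := u) hT hnp hleaf
      obtain ⟨l, hl, hbl⟩ := ih a (by omega)
      have hxa : Btw T u x a := by
        unfold Btw; rw [adj_dist hadj]; omega
      exact ⟨l, hl, (btw_trans hc hbl hxa).1⟩

/-- If two distinct edges leave `v`, targets behind them are separated by `v`. -/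
theorem step_glue (hT : T.IsTree) {v c q l r : V} (hcadj : T.Adj v c) (hqadj : T.Adj v q)
    (hcq : c ≠ q) (hbl : Btw T v c l) (hbr : Btw T v q r) : Btw T r v l := by
  have hc := hT.isConnected
  obtain ⟨t, h1, h2, h3⟩ := meet hT r l v
  -- h1 : Btw T r t l, h2 : Btw T v t r, h3 : Btw T v t l
  by_cases htv : t = v
  · subst htv; exact h1
  · exfalso
    obtain ⟨s, hsadj, hds⟩ := step hT (Ne.symm htv)
    have hbs : Btw T v s t := step_btw hc hsadj hds
    have hsr : Btw T v s r := (btw_trans hc h2 hbs).1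
    have hsl : Btw T v s l := (btw_trans hc h3 hbs).1
    have e1 : s = q := step_uniq' hT hsadj hqadj hsr hbr
    have e2 : s = c := step_uniq' hT hsadj hcadj hsl hbl
    exact hcq (e2 ▸ e1)

/-- Tube lemma: walking from `u` into a branch whose interior (towards `l`) has no
major vertices, any vertex `w` behind the same first edge is comparable with `l`. -/
theorem tube (hT : T.IsTree) : ∀ n : ℕ, ∀ {u a l w : V}, T.dist a l ≤ n → T.Adj u a →
    Btw T u a l → Btw T u a w →
    (∀ x, Btw T u x l → x ≠ u → x ≠ l → ¬ IsMajor T x) →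
    Btw T u w l ∨ Btw T u l w := by
  have hc := hT.isConnected
  intro n
  induction n with
  | zero =>
    intro u a l w hn hadj hbl hbw hnm
    have hal : a = l := dist_zero hc (by omega)
    subst hal
    exact Or.inr hbw
  | succ n ih =>
    intro u a l w hn hadj hbl hbw hnm
    by_cases hal : a = l
    · subst hal; exact Or.inr hbw
    by_cases hwa : w = a
    · subst hwa; exact Or.inl hbl
    obtain ⟨b, hbadj, hdb⟩ := step hT hal
    have hbbl : Btw T a b l := step_btw hc hbadj hdb
    obtain ⟨c, hcadj, hdc⟩ := step hT (fun h => hwa h.symm)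
    have hccw : Btw T a c w := step_btw hc hcadj hdc
    have hub := btw_trans' hc hbl hbbl
    have huc := btw_trans' hc hbw hccw
    have hau : T.dist u a = 1 := adj_dist hadj
    have hbne : b ≠ u := by
      have h1 : Btw T u a b := hub.2
      have h2 : T.dist a b = 1 := adj_dist hbadj
      have hd2 : T.dist u b = 2 := by unfold Btw at h1; omega
      intro h
      rw [h, SimpleGraph.dist_self] at hd2
      omega
    have hcne : c ≠ u := by
      have h1 : Btw T u a c := huc.2
      have h2 : T.dist a c = 1 := adj_dist hcadj
      have hd2 : T.dist u c = 2 := by unfold Btw at h1; omega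
      intro h
      rw [h, SimpleGraph.dist_self] at hd2
      omega
    have hanm : ¬ IsMajor T a := hnm a hbl hadj.ne' hal
    have hbc : b = c := by
      by_contra hne
      exact hanm (major_of_three hbadj hcadj hadj.symm hne hbne hcne)
    subst hbc
    have hcond : ∀ x, Btw T a x l → x ≠ a → x ≠ l → ¬ IsMajor T x := by
      intro x hx hxa hxl
      have hxu : x ≠ u := by
        intro h
        rw [h] at hx
        unfold Btw at hx hbl
        have := dist_pos hc hadj.ne
        have hd : T.dist a u = T.dist u a := dist_comm
        omega
      exact hnm x (btw_trans' hc hbl hx).1 hxu hxl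
    rcases ih (u := a) (a := b) (l := l) (w := w) (by omega) hbadj hbbl hccw hcond with h | h
    · left
      unfold Btw at *; omega
    · right
      unfold Btw at *; omega

/-- Every leaf has a "stem": the nearest major vertex, lying between the leaf
and every major vertex. -/
theorem stem_exists (hT : T.IsTree) (hnp : ∃ w, IsMajor T w) {l : V} (hl : IsLeaf T l) :
    ∃ v, IsMajor T v ∧ ∀ w, IsMajor T w → Btw T l v w := by
  have hc := hT.isConnected
  obtain ⟨v, hv, hmin⟩ := Set.exists_min_image {w | IsMajor T w}
    (fun w => T.dist l w) (Set.toFinite _) hnp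
  refine ⟨v, hv, ?_⟩
  intro w hw
  by_cases hwv : w = v
  · subst hwv; unfold Btw; simp [SimpleGraph.dist_self]
  obtain ⟨t, h1, h2, h3⟩ := meet hT v w l
  by_cases htv : t = v
  · subst htv; exact h3
  exfalso
  by_cases htm : IsMajor T t
  · have hle := hmin t htm
    have h2' : T.dist l t + T.dist t v = T.dist l v := h2
    have : T.dist t v = 0 := by omega
    exact htv (dist_zero hc this)
  by_cases htl : t = l
  · subst htl
    have hlv : t ≠ v := htv
    have hlw : t ≠ w := fun h => leaf_not_major (h ▸ hl) (h ▸ hw)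
    exact leaf_not_btw hT hl h1 (fun h => leaf_not_major (h ▸ hl) (h ▸ hv)) hlw
  have htw : t ≠ w := by
    intro h
    subst h
    have h2' : T.dist l t + T.dist t v = T.dist l v := h2
    have hle := hmin t hw
    have : T.dist t v = 0 := by omega
    exact htv (dist_zero hc this)
  obtain ⟨s1, a1, d1⟩ := step hT htl
  obtain ⟨s2, a2, d2⟩ := step hT htv
  obtain ⟨s3, a3, d3⟩ := step hT htw
  have hb1 : Btw T t s1 l := step_btw hc a1 d1
  have hb2 : Btw T t s2 v := step_btw hc a2 d2
  have hb3 : Btw T t s3 w := step_btw hc a3 d3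
  have hlt2 := btw_trans' hc h2 hb2
  have hlt3 := btw_trans' hc h3 hb3
  have hvt3 := btw_trans' hc h1 hb3
  have h12 : s1 ≠ s2 := by
    intro h; subst h
    have q1 : T.dist l s1 + T.dist s1 t = T.dist l t := btw_comm.mp hb1
    have q2 : Btw T l t s1 := hlt2.2
    unfold Btw at q2
    have := dist_pos hc (show t ≠ s1 from a2.ne)
    have hcm : T.dist t s1 = T.dist s1 t := dist_comm
    omega
  have h13 : s1 ≠ s3 := by
    intro h; subst h
    have q1 : T.dist l s1 + T.dist s1 t = T.dist l t := btw_comm.mp hb1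
    have q2 : Btw T l t s1 := hlt3.2
    unfold Btw at q2
    have := dist_pos hc (show t ≠ s1 from a3.ne)
    have hcm : T.dist t s1 = T.dist s1 t := dist_comm
    omega
  have h23 : s2 ≠ s3 := by
    intro h; subst h
    have q1 : T.dist v s2 + T.dist s2 t = T.dist v t := btw_comm.mp hb2
    have q2 : Btw T v t s2 := hvt3.2
    unfold Btw at q2
    have := dist_pos hc (show t ≠ s2 from a3.ne)
    have hcm : T.dist t s2 = T.dist s2 t := dist_comm
    omega
  exact htm (major_of_three a1 a2 a3 h12 h13 h23)

theorem terminal_of_stem (hc : T.Connected) {l v : V} (hl : IsLeaf T l) (hv : IsMajor T v)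
    (hall : ∀ w, IsMajor T w → Btw T l v w) : IsTerminalOf T l v := by
  refine ⟨hl, hv, fun w hw hne => ?_⟩
  have hb := hall w hw
  unfold Btw at hb
  have := dist_pos hc (show v ≠ w from fun h => hne h.symm)
  omega

theorem terminal_unique {l v v' : V} (h : IsTerminalOf T l v) (h' : IsTerminalOf T l v') :
    v = v' := by
  by_contra hne
  have h1 := h.2.2 v' h'.2.1 (Ne.symm hne)
  have h2 := h'.2.2 v h.2.1 hne
  omega

theorem stem_char (hT : T.IsTree) (hnp : ∃ w, IsMajor T w) {l v : V} (hl : IsLeaf T l)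
    (hv : IsMajor T v) (hno : ∀ x, Btw T l x v → x ≠ l → x ≠ v → ¬ IsMajor T x) :
    IsTerminalOf T l v ∧ ∀ w, IsMajor T w → Btw T l v w := by
  obtain ⟨v', hv', hall⟩ := stem_exists hT hnp hl
  have hb := hall v hv
  have heq : v' = v := by
    by_contra hne
    by_cases hvl : v' = l
    · exact leaf_not_major (hvl ▸ hl) (hvl ▸ hv')
    · exact hno v' hb hvl hne hv'
  subst heq
  exact ⟨terminal_of_stem hT.isConnected hl hv' hall, hall⟩

theorem exists_max_major (hT : T.IsTree) {r : V} {S : Set V} (hS : S.Nonempty)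
    (hSm : ∀ w ∈ S, IsMajor T w)
    (hclosed : ∀ w w', w ∈ S → IsMajor T w' → Btw T r w w' → w' ∈ S) :
    ∃ vs ∈ S, ∀ w, IsMajor T w → Btw T r vs w → w = vs := by
  obtain ⟨vs, hvsS, hmax⟩ := Set.exists_max_image S (fun w => T.dist r w) (Set.toFinite _) hS
  refine ⟨vs, hvsS, ?_⟩
  intro w hw hbw
  have hwS := hclosed vs w hvsS hw hbw
  have hle := hmax w hwS
  have hb : T.dist r vs + T.dist vs w = T.dist r w := hbw
  have : T.dist vs w = 0 := by omega
  exact (dist_zero hT.isConnected this).symm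

/-- A maximal major vertex (seen from `r`) has two distinct terminal leaves behind it. -/
theorem farterm (hT : T.IsTree) (hnp : ∃ w, IsMajor T w) {r vs : V} (hmaj : IsMajor T vs)
    (hmax : ∀ w, IsMajor T w → Btw T r vs w → w = vs) :
    ∃ l1 l2, l1 ≠ l2 ∧ IsTerminalOf T l1 vs ∧ IsTerminalOf T l2 vs ∧
      Btw T r vs l1 ∧ Btw T r vs l2 := by
  have hc := hT.isConnected
  by_cases hvr : vs = r
  · subst hvr
    have hallm : ∀ w, IsMajor T w → w = vs := fun w hw => hmax w hw (btw_left vs w)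
    have h2 : 1 < (T.neighborSet vs).ncard := by unfold IsMajor at hmaj; omega
    obtain ⟨c1, c2, hc1, hc2, hc12⟩ := (Set.one_lt_ncard_iff (Set.toFinite _)).mp h2
    obtain ⟨l1, hl1, hb1⟩ := ext_leaf hT hnp vs c1
    obtain ⟨l2, hl2, hb2⟩ := ext_leaf hT hnp vs c2
    have hs1 := stem_char hT hnp hl1 hmaj (fun x hx hxl hxv hxm => hxv (hallm x hxm))
    have hs2 := stem_char hT hnp hl2 hmaj (fun x hx hxl hxv hxm => hxv (hallm x hxm))
    have hne : l1 ≠ l2 := by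
      intro h; subst h
      exact hc12 (step_uniq' hT hc1 hc2 hb1 hb2)
    exact ⟨l1, l2, hne, hs1.1, hs2.1, btw_left vs l1, btw_left vs l2⟩
  · obtain ⟨q, hqadj, hqd⟩ := step hT hvr
    have hqb : Btw T vs q r := step_btw hc hqadj hqd
    have h2 : 1 < ((T.neighborSet vs) \ {q}).ncard := by
      have hsub : T.neighborSet vs ⊆ insert q ((T.neighborSet vs) \ {q}) := by
        intro x hx
        by_cases hxq : x = q
        · exact hxq ▸ Set.mem_insert _ _
        · exact Set.mem_insert_of_mem _ ⟨hx, hxq⟩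
      have h1 := Set.ncard_le_ncard hsub (Set.toFinite _)
      have h3 := Set.ncard_insert_le q ((T.neighborSet vs) \ {q})
      unfold IsMajor at hmaj
      omega
    obtain ⟨c1, c2, hc1, hc2, hc12⟩ := (Set.one_lt_ncard_iff (Set.toFinite _)).mp h2
    obtain ⟨l1, hl1, hb1⟩ := ext_leaf hT hnp vs c1
    obtain ⟨l2, hl2, hb2⟩ := ext_leaf hT hnp vs c2
    have hrb1 : Btw T r vs l1 := step_glue hT hc1.1 hqadj (by simpa using hc1.2) hb1 hqb
    have hrb2 : Btw T r vs l2 := step_glue hT hc2.1 hqadj (by simpa using hc2.2) hb2 hqb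
    have hno1 : ∀ x, Btw T l1 x vs → x ≠ l1 → x ≠ vs → ¬ IsMajor T x := by
      intro x hx hxl hxv hxm
      have hx' : Btw T vs x l1 := btw_comm.mp hx
      have := (btw_trans' hc hrb1 hx').2
      exact hxv (hmax x hxm this)
    have hno2 : ∀ x, Btw T l2 x vs → x ≠ l2 → x ≠ vs → ¬ IsMajor T x := by
      intro x hx hxl hxv hxm
      have hx' : Btw T vs x l2 := btw_comm.mp hx
      have := (btw_trans' hc hrb2 hx').2
      exact hxv (hmax x hxm this)
    have hs1 := stem_char hT hnp hl1 hmaj hno1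
    have hs2 := stem_char hT hnp hl2 hmaj hno2
    have hne : l1 ≠ l2 := by
      intro h; subst h
      exact hc12 (step_uniq' hT hc1.1 hc2.1 hb1 hb2)
    exact ⟨l1, l2, hne, hs1.1, hs2.1, hrb1, hrb2⟩

theorem terminal_internal (hc : T.Connected) {l v x : V} (ht : IsTerminalOf T l v)
    (hb : Btw T l x v) (hxl : x ≠ l) (hxv : x ≠ v) : ¬ IsMajor T x := by
  intro hm
  have h1 := ht.2.2 x hm hxv
  have hb' : T.dist l x + T.dist x v = T.dist l v := hb
  have := dist_pos hc hxv
  omega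

theorem internal_cond (hc : T.Connected) {l v u : V} (ht : IsTerminalOf T l v)
    (hb : Btw T l u v) (huv : u ≠ v) :
    ∀ x, Btw T u x l → x ≠ u → x ≠ l → ¬ IsMajor T x := by
  intro x hx hxu hxl hxm
  have hb' : T.dist l u + T.dist u v = T.dist l v := hb
  have hx' : T.dist u x + T.dist x l = T.dist u l := hx
  have hcm : T.dist l x = T.dist x l := dist_comm
  have hcm2 : T.dist l u = T.dist u l := dist_comm
  have hcm3 : T.dist x u = T.dist u x := dist_comm
  have t1 : T.dist x v ≤ T.dist x u + T.dist u v := dist_tri hc x u v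
  have t2 : T.dist l v ≤ T.dist l x + T.dist x v := dist_tri hc l x v
  have hxv : x ≠ v := by
    intro h; subst h
    have := dist_pos hc huv
    have hcm4 : T.dist u x = T.dist x u := dist_comm
    omega
  have hstrict := ht.2.2 x hxm hxv
  have := dist_pos hc hxv
  omega

theorem tube_leaf (hT : T.IsTree) {u s l1 l2 : V} (hl1 : IsLeaf T l1) (hl2 : IsLeaf T l2)
    (hadj : T.Adj u s) (hb1 : Btw T u s l1) (hb2 : Btw T u s l2) (h2u : l2 ≠ u) (h1u : l1 ≠ u)
    (hcond : ∀ x, Btw T u x l1 → x ≠ u → x ≠ l1 → ¬ IsMajor T x) : l1 = l2 := by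
  by_contra hne
  rcases tube hT (T.dist s l1) le_rfl hadj hb1 hb2 hcond with h | h
  · exact leaf_not_btw hT hl2 h h2u (fun e => hne e.symm)
  · exact leaf_not_btw hT hl1 h h1u hne

theorem steps_ne (hc : T.Connected) {x y u s t : V} (hb : Btw T x u y)
    (hbs : Btw T u s x) (hads : T.Adj u s) (hbt : Btw T u t y) (hadt : T.Adj u t) :
    s ≠ t := by
  intro he; subst he
  have h1 : T.dist u s + T.dist s x = T.dist u x := hbs
  have e2 := btw_trans' hc hb hbt
  have h2 : T.dist x u + T.dist u s = T.dist x s := e2.2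
  have ha := adj_dist hads
  have hcm : T.dist x u = T.dist u x := dist_comm
  have hcm2 : T.dist x s = T.dist s x := dist_comm
  omega

theorem bad_pair (hT : T.IsTree) {W : Set V} (hres : IsResolving T W) {l1 l2 v : V}
    (ht1 : IsTerminalOf T l1 v) (ht2 : IsTerminalOf T l2 v) (hne : l1 ≠ l2)
    (hbad1 : ∀ u ∈ W, ¬(Btw T l1 u v ∧ u ≠ v)) (hbad2 : ∀ u ∈ W, ¬(Btw T l2 u v ∧ u ≠ v)) :
    False := by
  have hc := hT.isConnected
  have hv := ht1.2.1
  have hl1 := ht1.1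
  have hl2 := ht2.1
  have hvl1 : v ≠ l1 := fun e => leaf_not_major hl1 (e ▸ hv)
  have hvl2 : v ≠ l2 := fun e => leaf_not_major hl2 (e ▸ hv)
  obtain ⟨u1, ha1, hd1⟩ := step hT hvl1
  obtain ⟨u2, ha2, hd2⟩ := step hT hvl2
  have hb1 : Btw T v u1 l1 := step_btw hc ha1 hd1
  have hb2 : Btw T v u2 l2 := step_btw hc ha2 hd2
  have hu12 : u1 ≠ u2 := by
    intro he
    rw [← he] at hb2 ha2 hd2
    by_cases hsl1 : u1 = l1
    · rw [hsl1] at hb2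
      exact leaf_not_btw hT hl1 hb2 (Ne.symm hvl1) hne
    by_cases hsl2 : u1 = l2
    · rw [hsl2] at hb1
      exact leaf_not_btw hT hl2 hb1 (Ne.symm hvl2) (Ne.symm hne)
    obtain ⟨a1, haa1, hda1⟩ := step hT hsl1
    obtain ⟨a2, haa2, hda2⟩ := step hT hsl2
    have hba1 : Btw T u1 a1 l1 := step_btw hc haa1 hda1
    have hba2 : Btw T u1 a2 l2 := step_btw hc haa2 hda2
    have e1 := btw_trans' hc hb1 hba1
    have e2 := btw_trans' hc hb2 hba2
    have hA1 : a1 ≠ v := by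
      have q : T.dist v u1 + T.dist u1 a1 = T.dist v a1 := e1.2
      have := adj_dist ha1
      have := adj_dist haa1
      intro h; rw [h, SimpleGraph.dist_self] at q; omega
    have hA2 : a2 ≠ v := by
      have q : T.dist v u1 + T.dist u1 a2 = T.dist v a2 := e2.2
      have := adj_dist ha1
      have := adj_dist haa2
      intro h; rw [h, SimpleGraph.dist_self] at q; omega
    have hnm : ¬ IsMajor T u1 := terminal_internal hc ht1 (btw_comm.mp hb1) hsl1 ha1.ne'
    have ha12 : a1 = a2 := by
      by_contra hx
      exact hnm (major_of_three haa1 haa2 ha1.symm hx hA1 hA2)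
    have hcond := internal_cond hc ht1 (btw_comm.mp hb1) ha1.ne'
    exact hne (tube_leaf hT hl1 hl2 haa1 hba1 (ha12 ▸ hba2) (Ne.symm hsl2) (Ne.symm hsl1) hcond)
  have key : ∀ (l u : V), IsTerminalOf T l v → T.Adj v u → Btw T v u l →
      (∀ z ∈ W, ¬(Btw T l z v ∧ z ≠ v)) → ∀ z ∈ W, T.dist u z = 1 + T.dist v z := by
    intro l u hterm hadj hbu hbad z hz
    have hvl : v ≠ l := fun e => leaf_not_major hterm.1 (e ▸ hterm.2.1)
    obtain ⟨t, m1, m2, m3⟩ := meet hT u z v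
    have hdv : T.dist v u = 1 := adj_dist hadj
    have m2' : T.dist v t + T.dist t u = T.dist v u := m2
    by_cases htv : t = v
    · rw [htv] at m1
      have q : T.dist u v + T.dist v z = T.dist u z := m1
      have hcm : T.dist u v = T.dist v u := dist_comm
      omega
    · have htu : t = u := by
        have h0 := dist_pos hc (fun e : v = t => htv e.symm)
        have : T.dist t u = 0 := by omega
        exact dist_zero hc this
      rw [htu] at m3
      have hcond : ∀ x, Btw T v x l → x ≠ v → x ≠ l → ¬ IsMajor T x :=
        fun x hx hxv hxl => terminal_internal hc hterm (btw_comm.mp hx) hxl hxv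
      rcases tube hT (T.dist u l) le_rfl hadj hbu m3 hcond with h | h
      · exfalso
        apply hbad z hz
        refine ⟨btw_comm.mp h, ?_⟩
        intro he
        rw [he] at m3
        have q : T.dist v u + T.dist u v = T.dist v v := m3
        rw [SimpleGraph.dist_self] at q
        have hcm : T.dist u v = T.dist v u := dist_comm
        omega
      · exfalso
        by_cases hlz : l = z
        · exact hbad z hz ⟨hlz ▸ btw_left l v, hlz ▸ Ne.symm hvl⟩
        · exact leaf_not_btw hT hterm.1 h (Ne.symm hvl) hlz
  have k1 := key l1 u1 ht1 ha1 hb1 hbad1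
  have k2 := key l2 u2 ht2 ha2 hb2 hbad2
  obtain ⟨z, hzW, hzne⟩ := hres u1 u2 hu12
  have q1 := k1 z hzW
  have q2 := k2 z hzW
  omega

theorem legs_disjoint (hT : T.IsTree) {l1 l2 v1 v2 u : V} (ht1 : IsTerminalOf T l1 v1)
    (ht2 : IsTerminalOf T l2 v2) (hne : l1 ≠ l2)
    (hb1 : Btw T l1 u v1) (hu1 : u ≠ v1) (hb2 : Btw T l2 u v2) (hu2 : u ≠ v2) : False := by
  have hc := hT.isConnected
  have hl1 := ht1.1
  have hl2 := ht2.1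
  by_cases hul1 : u = l1
  · rw [hul1] at hb2
    exact leaf_not_btw hT hl1 hb2 hne (hul1 ▸ hu2)
  by_cases hul2 : u = l2
  · rw [hul2] at hb1
    exact leaf_not_btw hT hl2 hb1 (Ne.symm hne) (hul2 ▸ hu1)
  have hnm : ¬ IsMajor T u := terminal_internal hc ht1 hb1 hul1 hu1
  obtain ⟨s1, hs1a, hs1d⟩ := step hT hul1
  obtain ⟨t1, ht1a, ht1d⟩ := step hT hu1
  obtain ⟨s2, hs2a, hs2d⟩ := step hT hul2
  obtain ⟨t2, ht2a, ht2d⟩ := step hT hu2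
  have hbs1 : Btw T u s1 l1 := step_btw hc hs1a hs1d
  have hbt1 : Btw T u t1 v1 := step_btw hc ht1a ht1d
  have hbs2 : Btw T u s2 l2 := step_btw hc hs2a hs2d
  have hbt2 : Btw T u t2 v2 := step_btw hc ht2a ht2d
  have hst1 : s1 ≠ t1 := steps_ne hc hb1 hbs1 hs1a hbt1 ht1a
  have hst2 : s2 ≠ t2 := steps_ne hc hb2 hbs2 hs2a hbt2 ht2a
  have hcond := internal_cond hc ht1 hb1 hu1
  have hmem : ∀ w, T.Adj u w → w = s1 ∨ w = t1 := by
    intro w hw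
    by_contra hx
    push_neg at hx
    exact hnm (major_of_three hs1a ht1a hw hst1 (Ne.symm hx.1) (Ne.symm hx.2))
  rcases hmem s2 hs2a with he | he
  · exact hne (tube_leaf hT hl1 hl2 hs1a hbs1 (he ▸ hbs2) (Ne.symm hul2) (Ne.symm hul1) hcond)
  · rcases hmem t2 ht2a with he2 | he2
    · rcases tube hT (T.dist s1 l1) le_rfl hs1a hbs1 (he2 ▸ hbt2) hcond with h | h
      · by_cases hv2l1 : v2 = l1
        · exact leaf_not_major hl1 (hv2l1 ▸ ht2.2.1)
        · exact hcond v2 h (Ne.symm hu2) hv2l1 ht2.2.1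
      · by_cases hl1v2 : l1 = v2
        · exact leaf_not_major hl1 (hl1v2.symm ▸ ht2.2.1)
        · exact leaf_not_btw hT hl1 h (Ne.symm hul1) hl1v2
    · exact hst2 (he.trans he2.symm)

theorem lower_bound (hT : T.IsTree) (hnp : ∃ w, IsMajor T w) {W : Set V}
    (hres : IsResolving T W) :
    {v | IsLeaf T v}.ncard ≤ {v | IsExteriorMajor T v}.ncard + W.ncard := by
  classical
  have hc := hT.isConnected
  have hstem : ∀ l : V, ∃ v : V, IsLeaf T l → IsTerminalOf T l v := by
    intro l
    by_cases h : IsLeaf T l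
    · obtain ⟨v, hv, hall⟩ := stem_exists hT hnp h
      exact ⟨v, fun _ => terminal_of_stem hc h hv hall⟩
    · exact ⟨l, fun hh => absurd hh h⟩
  choose stem hstemspec using hstem
  set L := {v | IsLeaf T v} with hLdef
  set E := {v | IsExteriorMajor T v} with hEdef
  set B := {l | l ∈ L ∧ ∀ u ∈ W, ¬(Btw T l u (stem l) ∧ u ≠ stem l)} with hBdef
  have hBL : B ⊆ L := fun l hl => hl.1
  have hBinj : Set.InjOn stem B := by
    intro l1 h1 l2 h2 he
    by_contra hne
    have ht2 : IsTerminalOf T l2 (stem l1) := by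
      rw [he]; exact hstemspec l2 h2.1
    have hbad2 : ∀ u ∈ W, ¬(Btw T l2 u (stem l1) ∧ u ≠ stem l1) := by
      rw [he]; exact h2.2
    exact bad_pair hT hres (hstemspec l1 h1.1) ht2 hne h1.2 hbad2
  have hBE : stem '' B ⊆ E := by
    rintro v ⟨l, hl, rfl⟩
    exact ⟨l, hstemspec l hl.1⟩
  have hBcard : B.ncard ≤ E.ncard := by
    rw [← Set.ncard_image_of_injOn hBinj]
    exact Set.ncard_le_ncard hBE (Set.toFinite _)
  have hgood : ∀ l : V, ∃ u : V, l ∈ L \ B → (u ∈ W ∧ Btw T l u (stem l) ∧ u ≠ stem l) := by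
    intro l
    by_cases h : l ∈ L \ B
    · have h1 := h.1
      have h2 := h.2
      rw [hBdef] at h2
      simp only [Set.mem_setOf_eq, not_and, not_forall] at h2
      obtain ⟨u, hu, hcontra⟩ := h2 h1
      rw [not_not] at hcontra
      obtain ⟨hca, hcb⟩ := hcontra
      exact ⟨u, fun _ => ⟨hu, hca, hcb⟩⟩
    · exact ⟨l, fun hh => absurd hh h⟩
  choose f hf using hgood
  have hfinj : Set.InjOn f (L \ B) := by
    intro l1 h1 l2 h2 he
    by_contra hne
    obtain ⟨hw1, hfb1, hfu1⟩ := hf l1 h1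
    obtain ⟨hw2, hfb2, hfu2⟩ := hf l2 h2
    rw [← he] at hfb2 hfu2
    exact legs_disjoint hT (hstemspec l1 h1.1) (hstemspec l2 h2.1) hne hfb1 hfu1 hfb2 hfu2
  have hGcard : (L \ B).ncard ≤ W.ncard := by
    rw [← Set.ncard_image_of_injOn hfinj]
    apply Set.ncard_le_ncard _ (Set.toFinite _)
    rintro u ⟨l, hl, rfl⟩
    exact (hf l hl).1
  have hsplit : (L \ B).ncard = L.ncard - B.ncard := Set.ncard_diff hBL (Set.toFinite _)
  have hBleL : B.ncard ≤ L.ncard := Set.ncard_le_ncard hBL (Set.toFinite _)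
  omega

theorem opp_steps_ne (hc : T.Connected) {x y m a b : V} (hbm : Btw T x m y)
    (hadja : T.Adj m a) (hba : Btw T m a x) (hadjb : T.Adj m b) (hbb : Btw T m b y) :
    a ≠ b := by
  intro he; subst he
  have h1 : T.dist m a + T.dist a x = T.dist m x := hba
  have e2 := btw_trans' hc hbm hbb
  have h2 : T.dist x m + T.dist m a = T.dist x a := e2.2
  have := adj_dist hadja
  have c1 : T.dist m x = T.dist x m := dist_comm
  have c2 : T.dist a x = T.dist x a := dist_comm
  omega

theorem res_side (hT : T.IsTree) {x y m a b : V} (hbm : Btw T x m y)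
    (heq : T.dist x m = T.dist y m) (hmx : m ≠ x) (hmy : m ≠ y)
    (hadja : T.Adj m a) (hba : Btw T m a x)
    (hadjb : T.Adj m b) (hbb : Btw T m b y)
    {p : V} (hbp : Btw T m a p) : T.dist x p < T.dist y p := by
  have hc := hT.isConnected
  have hab : a ≠ b := opp_steps_ne hc hbm hadja hba hadjb hbb
  have hymp : Btw T y m p := by
    obtain ⟨t', n1, n2, n3⟩ := meet hT y p m
    by_cases ht' : t' = m
    · rw [ht'] at n1; exact n1
    · exfalso
      obtain ⟨s, hsadj, hsd⟩ := step hT (fun e : m = t' => ht' e.symm)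
      have hbs : Btw T m s t' := step_btw hc hsadj hsd
      have hsy : Btw T m s y := (btw_trans hc n2 hbs).1
      have hsp : Btw T m s p := (btw_trans hc n3 hbs).1
      have e1 : s = b := step_uniq' hT hsadj hadjb hsy hbb
      have e2 : s = a := step_uniq' hT hsadj hadja hsp hbp
      exact hab (e2 ▸ e1)
  obtain ⟨t, m1, m2, m3⟩ := meet hT x p m
  have htm : t ≠ m := by
    intro he; rw [he] at m1
    have q : T.dist x m + T.dist m p = T.dist x p := m1
    have h1 : T.dist m a + T.dist a x = T.dist m x := hba
    have h2 : T.dist m a + T.dist a p = T.dist m p := hbp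
    have tri : T.dist x p ≤ T.dist x a + T.dist a p := dist_tri hc x a p
    have := adj_dist hadja
    have c1 : T.dist m x = T.dist x m := dist_comm
    have c2 : T.dist a x = T.dist x a := dist_comm
    omega
  have q1 : T.dist y m + T.dist m p = T.dist y p := hymp
  have q2 : T.dist x t + T.dist t p = T.dist x p := m1
  have q3 : T.dist m t + T.dist t x = T.dist m x := m2
  have q4 : T.dist m t + T.dist t p = T.dist m p := m3
  have hpos : 0 < T.dist m t := dist_pos hc (fun e => htm e.symm)
  have c1 : T.dist m x = T.dist x m := dist_comm
  have c2 : T.dist t x = T.dist x t := dist_comm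
  have c3 : T.dist y m = T.dist m y := dist_comm
  have c4 : T.dist x m = T.dist m x := dist_comm
  omega

theorem upper_bound (hT : T.IsTree) (hnp : ∃ w, IsMajor T w) :
    ∃ W : Set V, W.ncard = {v | IsLeaf T v}.ncard - {v | IsExteriorMajor T v}.ncard ∧
      IsResolving T W := by
  classical
  have hc := hT.isConnected
  have hg : ∀ v : V, ∃ l : V, IsExteriorMajor T v → IsTerminalOf T l v := by
    intro v; by_cases h : IsExteriorMajor T v
    · exact ⟨h.choose, fun _ => h.choose_spec⟩
    · exact ⟨v, fun hh => absurd hh h⟩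
  choose g hgspec using hg
  set L := {v | IsLeaf T v} with hLdef
  set E := {v | IsExteriorMajor T v} with hEdef
  set W := L \ (g '' E) with hWdef
  have hginj : Set.InjOn g E := by
    intro v1 h1 v2 h2 he
    exact terminal_unique (hgspec v1 h1) (by rw [he]; exact hgspec v2 h2)
  have hsub : g '' E ⊆ L := by rintro l ⟨v, hv, rfl⟩; exact (hgspec v hv).1
  have hcard : W.ncard = L.ncard - E.ncard := by
    rw [hWdef, Set.ncard_diff hsub (Set.toFinite _), Set.ncard_image_of_injOn hginj]
  refine ⟨W, hcard, ?_⟩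
  have hmemW : ∀ l v : V, IsTerminalOf T l v → l ≠ g v → l ∈ W := by
    intro l v ht hlg
    refine ⟨ht.1, ?_⟩
    rintro ⟨v', hv', he⟩
    have ht' : IsTerminalOf T l v' := by rw [← he]; exact hgspec v' hv'
    have hv'v : v' = v := terminal_unique ht' ht
    rw [hv'v] at he
    exact hlg he.symm
  have hWterm : ∀ (r vs : V), IsMajor T vs → (∀ w, IsMajor T w → Btw T r vs w → w = vs) →
      ∃ l, l ∈ W ∧ IsTerminalOf T l vs ∧ Btw T r vs l := by
    intro r vs hmaj hmax
    obtain ⟨l1, l2, hne, ht1, ht2, hr1, hr2⟩ := farterm hT hnp hmaj hmax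
    by_cases h : l1 = g vs
    · refine ⟨l2, hmemW l2 vs ht2 ?_, ht2, hr2⟩
      rw [← h]; exact Ne.symm hne
    · exact ⟨l1, hmemW l1 vs ht1 h, ht1, hr1⟩
  intro x y hxy
  by_contra hno
  push_neg at hno
  obtain ⟨w0, hw0⟩ := hnp
  obtain ⟨vs0, hvs0, hmax0⟩ := exists_max_major (r := w0) hT
    (S := {w | IsMajor T w}) ⟨w0, hw0⟩ (fun w hw => hw) (fun w w' _ hw' _ => hw')
  obtain ⟨l0, hl0W, hl0t, -⟩ := hWterm w0 vs0 hvs0 hmax0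
  obtain ⟨m, p1, p2, p3⟩ := meet hT x y l0
  have heqd : T.dist x m = T.dist y m := by
    have e1 : T.dist l0 m + T.dist m x = T.dist l0 x := p2
    have e2 : T.dist l0 m + T.dist m y = T.dist l0 y := p3
    have e3 := hno l0 hl0W
    have c1 : T.dist m x = T.dist x m := dist_comm
    have c2 : T.dist m y = T.dist y m := dist_comm
    have c3 : T.dist l0 x = T.dist x l0 := dist_comm
    have c4 : T.dist l0 y = T.dist y l0 := dist_comm
    omega
  have hmx : m ≠ x := by
    intro he; rw [he] at heqd
    rw [SimpleGraph.dist_self] at heqd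
    exact hxy (dist_zero hc heqd.symm).symm
  have hmy : m ≠ y := by
    intro he; rw [he] at heqd
    rw [SimpleGraph.dist_self] at heqd
    exact hxy (dist_zero hc heqd)
  obtain ⟨a, hadja, hda⟩ := step hT hmx
  obtain ⟨b, hadjb, hdb⟩ := step hT hmy
  have hba : Btw T m a x := step_btw hc hadja hda
  have hbb : Btw T m b y := step_btw hc hadjb hdb
  have hbm : Btw T x m y := p1
  have hside_a : ∀ p, Btw T m a p → T.dist x p < T.dist y p :=
    fun p hp => res_side hT hbm heqd hmx hmy hadja hba hadjb hbb hp
  have hbm' : Btw T y m x := btw_comm.mp p1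
  have hside_b : ∀ p, Btw T m b p → T.dist y p < T.dist x p :=
    fun p hp => res_side hT hbm' heqd.symm hmy hmx hadjb hbb hadja hba hp
  have hab : a ≠ b := opp_steps_ne hc hbm hadja hba hadjb hbb
  by_cases hA : ∃ w, IsMajor T w ∧ Btw T m a w
  · obtain ⟨vs, hvsS, hmax⟩ := exists_max_major (r := m) hT
      (S := {w | IsMajor T w ∧ Btw T m a w}) hA (fun w hw => hw.1)
      (fun w w' hw hw' hb => ⟨hw', (btw_trans hc hb hw.2).1⟩)
    obtain ⟨l, hlW, hlt, hlb⟩ := hWterm m vs hvsS.1 hmax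
    have hmal : Btw T m a l := (btw_trans hc hlb hvsS.2).1
    have := hside_a l hmal
    have := hno l hlW
    omega
  by_cases hB : ∃ w, IsMajor T w ∧ Btw T m b w
  · obtain ⟨vs, hvsS, hmax⟩ := exists_max_major (r := m) hT
      (S := {w | IsMajor T w ∧ Btw T m b w}) hB (fun w hw => hw.1)
      (fun w w' hw hw' hb => ⟨hw', (btw_trans hc hb hw.2).1⟩)
    obtain ⟨l, hlW, hlt, hlb⟩ := hWterm m vs hvsS.1 hmax
    have hmbl : Btw T m b l := (btw_trans hc hlb hvsS.2).1
    have := hside_b l hmbl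
    have := hno l hlW
    omega
  by_cases hmmaj : IsMajor T m
  · obtain ⟨lx, hlx, hbx⟩ := ext_leaf hT ⟨w0, hw0⟩ m a
    obtain ⟨ly, hly, hby⟩ := ext_leaf hT ⟨w0, hw0⟩ m b
    have hbax : Btw T m a lx := hbx
    have hbby : Btw T m b ly := hby
    have hcondx : ∀ x', Btw T lx x' m → x' ≠ lx → x' ≠ m → ¬ IsMajor T x' := by
      intro x' hx' h1 h2 hm'
      apply hA
      refine ⟨x', hm', ?_⟩
      obtain ⟨s, hsadj, hsd⟩ := step hT (fun e : m = x' => h2 e.symm)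
      have hbs : Btw T m s x' := step_btw hc hsadj hsd
      have hbx'l : Btw T m x' lx := btw_comm.mp hx'
      have hsl : Btw T m s lx := (btw_trans hc hbx'l hbs).1
      have hsa : s = a := step_uniq' hT hsadj hadja hsl hbax
      exact hsa ▸ hbs
    have hcondy : ∀ x', Btw T ly x' m → x' ≠ ly → x' ≠ m → ¬ IsMajor T x' := by
      intro x' hx' h1 h2 hm'
      apply hB
      refine ⟨x', hm', ?_⟩
      obtain ⟨s, hsadj, hsd⟩ := step hT (fun e : m = x' => h2 e.symm)
      have hbs : Btw T m s x' := step_btw hc hsadj hsd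
      have hbx'l : Btw T m x' ly := btw_comm.mp hx'
      have hsl : Btw T m s ly := (btw_trans hc hbx'l hbs).1
      have hsb : s = b := step_uniq' hT hsadj hadjb hsl hbby
      exact hsb ▸ hbs
    have hsx := stem_char hT ⟨w0, hw0⟩ hlx hmmaj hcondx
    have hsy := stem_char hT ⟨w0, hw0⟩ hly hmmaj hcondy
    have hlxy : lx ≠ ly := by
      intro he
      exact hab (step_uniq' hT hadja hadjb hbax (by rw [he]; exact hbby))
    by_cases hgx : lx = g m
    · have hlyW : ly ∈ W := hmemW ly m hsy.1 (by rw [← hgx]; exact Ne.symm hlxy)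
      have := hside_b ly hbby
      have := hno ly hlyW
      omega
    · have hlxW : lx ∈ W := hmemW lx m hsx.1 hgx
      have := hside_a lx hbax
      have := hno lx hlxW
      omega
  · have hw0m : w0 ≠ m := fun e => hmmaj (e ▸ hw0)
    obtain ⟨s, hsadj, hsd⟩ := step hT (fun e : m = w0 => hw0m e.symm)
    have hbs : Btw T m s w0 := step_btw hc hsadj hsd
    have : s = a ∨ s = b := by
      by_contra hx; push_neg at hx
      exact hmmaj (major_of_three hadja hadjb hsadj hab (Ne.symm hx.1) (Ne.symm hx.2))
    rcases this with he | he
    · exact hA ⟨w0, hw0, he ▸ hbs⟩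
    · exact hB ⟨w0, hw0, he ▸ hbs⟩

end MetricDimTree

/-- If `T` is a finite tree that is not a path (it has a vertex of degree at least 3),
then `dim(T) = σ(T) - ex(T)`, where `σ(T)` is the number of leaves of `T` and
`ex(T)` is the number of exterior major vertices of `T`. -/
theorem metricDim_tree {V : Type*} [Fintype V] (T : SimpleGraph V)
    (hT : T.IsTree) (hnp : ∃ v, IsMajor T v) :
    metricDim T = {v | IsLeaf T v}.ncard - {v | IsExteriorMajor T v}.ncard := by
  obtain ⟨W, hWcard, hWres⟩ := MetricDimTree.upper_bound hT hnp
  have hmem : {v | IsLeaf T v}.ncard - {v | IsExteriorMajor T v}.ncard ∈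
      {n | ∃ W : Set V, W.ncard = n ∧ IsResolving T W} := ⟨W, hWcard, hWres⟩
  apply le_antisymm
  · exact Nat.sInf_le hmem
  · apply le_csInf ⟨_, hmem⟩
    rintro n ⟨W', hW'card, hW'res⟩
    have := MetricDimTree.lower_bound hT hnp hW'res
    omega
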